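/- arXiv:1009.1610 — 2 statements merged into one kernel-verified Lean document; each statement's English description precedes it below -/
import Mathlib

section
/- Let K be a field of characteristic zero with a primitive n-th root of unity ζ, n an odd positive integer, and let D_n denote the n-th Dickson polynomial of the first kind with parameter 1, characterized by D_n(x + 1/x) = xⁿ + 1/xⁿ. Then D_n(x₁) - D_n(x₂) = (x₁ - x₂)·∏_{i=1}^{(n-1)/2} (x₁² + x₂² - (ζ^i + ζ^{-i})x₁x₂ + (ζ^i - ζ^{-i})²) in K[x₁,x₂]. -/
open Finset

lemma nthRootsFinset_eq_image' {L : Type*} [CommRing L] [IsDomain L] [DecidableEq L] {n : ℕ} (hn : 0 < n)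
    {ζ : L} (hζ : IsPrimitiveRoot ζ n) :
    Polynomial.nthRootsFinset n (1 : L) = (range n).image (ζ ^ ·) := by
  symm
  apply Finset.eq_of_subset_of_card_le
  · intro x hx
    simp only [mem_image, mem_range] at hx
    obtain ⟨i, hi, rfl⟩ := hx
    exact (Polynomial.mem_nthRootsFinset hn 1).2
      (by rw [← pow_mul, mul_comm, pow_mul, hζ.pow_eq_one, one_pow])
  · rw [Finset.card_image_of_injOn (fun i hi j hj h =>
      hζ.pow_inj (mem_range.1 hi) (mem_range.1 hj) h), hζ.card_nthRootsFinset, card_range]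

lemma pow_sub_pow_prod' {L : Type*} [Field L] {n : ℕ} (hn : 0 < n) {ζ : L}
    (hζ : IsPrimitiveRoot ζ n) (x y : L) :
    x ^ n - y ^ n = ∏ i ∈ range n, (x - ζ ^ i * y) := by
  classical
  rw [hζ.pow_sub_pow_eq_prod_sub_mul x y hn, nthRootsFinset_eq_image' hn hζ,
    Finset.prod_image (fun i hi j hj h => hζ.pow_inj (mem_range.1 hi) (mem_range.1 hj) h)]

lemma key_ident {L : Type*} [Field L] {n : ℕ} (hodd : Odd n) {ζ : L}
    (hζ : IsPrimitiveRoot ζ n) (u v : L) (hu : u ≠ 0) (hv : v ≠ 0) :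
    u ^ n + u⁻¹ ^ n - (v ^ n + v⁻¹ ^ n)
      = (u + u⁻¹ - (v + v⁻¹)) *
        ∏ i ∈ Icc 1 ((n - 1) / 2),
          ((u + u⁻¹) ^ 2 + (v + v⁻¹) ^ 2 - (ζ ^ i + ζ⁻¹ ^ i) * (u + u⁻¹) * (v + v⁻¹)
            + (ζ ^ i - ζ⁻¹ ^ i) ^ 2) := by
  obtain ⟨m, hm⟩ := hodd
  have hn : 0 < n := by omega
  have hz0 : ζ ≠ 0 := hζ.ne_zero hn.ne'
  set c : ℕ → L := fun i => (u + u⁻¹) - ζ ^ i * v - ζ⁻¹ ^ i * v⁻¹ with hc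
  -- step 1
  have step1 : u ^ n + u⁻¹ ^ n - (v ^ n + v⁻¹ ^ n)
      = u⁻¹ ^ n * ((u ^ n - v ^ n) * (u ^ n - v⁻¹ ^ n)) := by
    have hun : u ^ n * u⁻¹ ^ n = 1 := by rw [← mul_pow, mul_inv_cancel₀ hu, one_pow]
    have hvn : v ^ n * v⁻¹ ^ n = 1 := by rw [← mul_pow, mul_inv_cancel₀ hv, one_pow]
    linear_combination (-u ^ n + v⁻¹ ^ n + v ^ n) * hun - u⁻¹ ^ n * hvn
  have step2 : u ^ n - v ^ n = ∏ i ∈ range n, (u - ζ ^ i * v) :=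
    pow_sub_pow_prod' hn hζ u v
  have step3 : u ^ n - v⁻¹ ^ n = ∏ i ∈ range n, (u - ζ⁻¹ ^ i * v⁻¹) :=
    pow_sub_pow_prod' hn hζ.inv u v⁻¹
  have step4 : u ^ n + u⁻¹ ^ n - (v ^ n + v⁻¹ ^ n) = ∏ i ∈ range n, c i := by
    rw [step1, step2, step3]
    rw [show u⁻¹ ^ n = ∏ _i ∈ range n, u⁻¹ by simp, ← Finset.prod_mul_distrib,
      ← Finset.prod_mul_distrib]
    refine Finset.prod_congr rfl fun i _ => ?_
    have hzi : ζ ^ i ≠ 0 := pow_ne_zero _ hz0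
    have hst : ζ ^ i * ζ⁻¹ ^ i = 1 := by rw [inv_pow]; exact mul_inv_cancel₀ hzi
    simp only [hc]
    field_simp
    linear_combination v * hst
  -- reindex
  have hpair : ∀ i ∈ Icc 1 ((n-1)/2), c i * c (n - i)
      = (u + u⁻¹) ^ 2 + (v + v⁻¹) ^ 2 - (ζ ^ i + ζ⁻¹ ^ i) * (u + u⁻¹) * (v + v⁻¹)
          + (ζ ^ i - ζ⁻¹ ^ i) ^ 2 := by
    intro i hi
    have hin : i ≤ n := le_trans (mem_Icc.1 hi).2 (by omega)
    have h1 : ζ ^ (n - i) = ζ⁻¹ ^ i := by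
      rw [pow_sub₀ ζ hz0 hin, hζ.pow_eq_one, one_mul, inv_pow]
    have h2 : ζ⁻¹ ^ (n - i) = ζ ^ i := by
      rw [pow_sub₀ ζ⁻¹ (inv_ne_zero hz0) hin, hζ.inv.pow_eq_one, one_mul, inv_pow, inv_inv]
    have hzi : ζ ^ i ≠ 0 := pow_ne_zero _ hz0
    have hst : ζ ^ i * ζ⁻¹ ^ i = 1 := by rw [inv_pow]; exact mul_inv_cancel₀ hzi
    have hvw : v * v⁻¹ = 1 := mul_inv_cancel₀ hv
    simp only [hc, h1, h2]
    linear_combination (v ^ 2 + v⁻¹ ^ 2 + 2) * hst + ((ζ ^ i) ^ 2 + (ζ⁻¹ ^ i) ^ 2 - 2) * hvw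
  have hsplit : ∏ i ∈ range n, c i = c 0 * ∏ i ∈ range m, (c (i+1) * c (n - (i+1))) := by
    have hnm : n = 2 * m + 1 := by omega
    subst hnm
    rw [Finset.prod_range_succ', two_mul, Finset.prod_range_add, Finset.prod_mul_distrib]
    have h5 : ∏ i ∈ range m, c (m + i + 1) = ∏ i ∈ range m, c (m + m + 1 - (i + 1)) := by
      rw [← Finset.prod_range_reflect]
      refine Finset.prod_congr rfl fun i hi => ?_
      congr 1
      have := Finset.mem_range.1 hi
      omega
    rw [h5]
    ring
  have hIcc : ∏ i ∈ Icc 1 ((n-1)/2), (c i * c (n - i))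
      = ∏ i ∈ range m, (c (i+1) * c (n - (i+1))) := by
    have hm2 : (n - 1) / 2 = m := by omega
    rw [hm2, ← Finset.Ico_add_one_right_eq_Icc, Finset.prod_Ico_eq_prod_range]
    simp [add_comm]
  have hc0 : c 0 = u + u⁻¹ - (v + v⁻¹) := by simp [hc]; ring
  rw [step4, hsplit, ← hIcc, hc0, Finset.prod_congr rfl hpair]

lemma exists_add_inv_eq {L : Type*} [Field L] [IsAlgClosed L] (a : L) :
    ∃ u : L, u ≠ 0 ∧ u + u⁻¹ = a := by
  obtain ⟨z, hz⟩ := IsAlgClosed.exists_root (Polynomial.X ^ 2 - Polynomial.C a * Polynomial.X + 1 : Polynomial L) (by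
    have h2 : (Polynomial.X ^ 2 - Polynomial.C a * Polynomial.X + 1 : Polynomial L).degree = 2 := by compute_degree!
    rw [h2]; exact (by decide : (2 : WithBot ℕ) ≠ 0))
  have hz' : z ^ 2 - a * z + 1 = 0 := by simpa using hz
  have hz0 : z ≠ 0 := by rintro rfl; simp at hz'
  refine ⟨z, hz0, ?_⟩
  field_simp
  linear_combination hz'

open MvPolynomial in
theorem stmt_6 (K : Type*) [Field K] [CharZero K] (n : ℕ) (hodd : Odd n) (hn : 0 < n)
    (ζ : K) (hζ : IsPrimitiveRoot ζ n) :
    Polynomial.aeval (X 0 : MvPolynomial (Fin 2) K) (Polynomial.dickson 1 (1 : K) n)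
        - Polynomial.aeval (X 1 : MvPolynomial (Fin 2) K) (Polynomial.dickson 1 (1 : K) n)
      = (X 0 - X 1) *
          ∏ i ∈ Finset.Icc 1 ((n - 1) / 2),
            ((X 0) ^ 2 + (X 1) ^ 2 - C (ζ ^ i + ζ⁻¹ ^ i) * X 0 * X 1
              + C ((ζ ^ i - ζ⁻¹ ^ i) ^ 2)) := by
  set L := AlgebraicClosure K
  let φ : K →+* L := algebraMap K L
  haveI : CharZero L := charZero_of_injective_algebraMap φ.injective
  apply MvPolynomial.map_injective φ φ.injective
  apply MvPolynomial.funext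
  intro x
  have hx : ∀ p : MvPolynomial (Fin 2) K, eval x (map φ p) = aeval x p := fun p => by
    rw [MvPolynomial.aeval_def, MvPolynomial.eval₂_eq_eval_map]
  rw [hx, hx]
  have hd : ∀ j : Fin 2, (MvPolynomial.aeval x) (Polynomial.aeval (X j : MvPolynomial (Fin 2) K)
      (Polynomial.dickson 1 (1 : K) n)) = Polynomial.eval (x j) (Polynomial.dickson 1 (1 : L) n) := by
    intro j
    rw [← Polynomial.aeval_algHom_apply, MvPolynomial.aeval_X, Polynomial.aeval_def,
      Polynomial.eval₂_eq_eval_map, Polynomial.map_dickson, map_one]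
  rw [map_sub, hd 0, hd 1, map_mul, map_sub, MvPolynomial.aeval_X, MvPolynomial.aeval_X, map_prod]
  obtain ⟨u, hu, hua⟩ := exists_add_inv_eq (x 0)
  obtain ⟨v, hv, hvb⟩ := exists_add_inv_eq (x 1)
  have hζ' : IsPrimitiveRoot (φ ζ) n := hζ.map_of_injective φ.injective
  rw [← hua, ← hvb,
    Polynomial.dickson_one_one_eval_add_inv u u⁻¹ (mul_inv_cancel₀ hu),
    Polynomial.dickson_one_one_eval_add_inv v v⁻¹ (mul_inv_cancel₀ hv)]
  have := key_ident hodd hζ' u v hu hv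
  rw [this]
  congr 1
  refine Finset.prod_congr rfl fun i _ => ?_
  simp only [map_add, map_sub, map_mul, map_pow, MvPolynomial.aeval_X, MvPolynomial.aeval_C,
    map_inv₀, map_one]
  rw [← hua, ← hvb]
end

section
/- Let α satisfy α² + α + 2 = 0, with conjugate ᾱ = -1 - α, and let t be an indeterminate over ℚ(α). Let M be the 6×6 lower-triangular matrix over ℚ(α)[t] with rows: (α,0,0,0,0,0), (0,α,0,0,0,0), (-3(2α+1)t, 0, ᾱ, 0,0,0), (-4(α+4)t, -4(α+4)t, 0, α, 0,0), (35(α+2)t², -5(2α+1)t, -5(α-3)t, 0, ᾱ, 0), (-42(α-3)t², -21(2α-3)t², -6(α-3)t, -6(2α+1)t, 0, ᾱ). Then M·M^σ = 2·I₆, where M^σ is obtained by applying the conjugation α ↦ ᾱ to all entries. -/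
section AuxVec
variable {α : Type*}
private lemma v5' (x : α) (u : Fin 5 → α) : Matrix.vecCons x u 5 = u 4 := rfl
private lemma v4' (x : α) (u : Fin 5 → α) : Matrix.vecCons x u 4 = u 3 := rfl
private lemma v3' (x : α) (u : Fin 5 → α) : Matrix.vecCons x u 3 = u 2 := rfl
private lemma v2' (x : α) (u : Fin 5 → α) : Matrix.vecCons x u 2 = u 1 := rfl
private lemma w4' (x : α) (u : Fin 4 → α) : Matrix.vecCons x u 4 = u 3 := rfl
private lemma w3' (x : α) (u : Fin 4 → α) : Matrix.vecCons x u 3 = u 2 := rfl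
private lemma w2' (x : α) (u : Fin 4 → α) : Matrix.vecCons x u 2 = u 1 := rfl
private lemma t3' (x : α) (u : Fin 3 → α) : Matrix.vecCons x u 3 = u 2 := rfl
private lemma t2' (x : α) (u : Fin 3 → α) : Matrix.vecCons x u 2 = u 1 := rfl
private lemma s2' (x : α) (u : Fin 2 → α) : Matrix.vecCons x u 2 = u 1 := rfl
end AuxVec

set_option maxHeartbeats 2000000 in
open Polynomial in
theorem stmt_11 (K : Type*) [Field K] [CharZero K] (α : K) (hα : α ^ 2 + α + 2 = 0)
    (Mmat : K → K → Matrix (Fin 6) (Fin 6) (Polynomial K))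
    (hMmat : ∀ a b, Mmat a b =
      !![C a, 0, 0, 0, 0, 0;
         0, C a, 0, 0, 0, 0;
         C (-3 * (2 * a + 1)) * X, 0, C b, 0, 0, 0;
         C (-4 * (a + 4)) * X, C (-4 * (a + 4)) * X, 0, C a, 0, 0;
         C (35 * (a + 2)) * X ^ 2, C (-5 * (2 * a + 1)) * X, C (-5 * (a - 3)) * X, 0, C b, 0;
         C (-42 * (a - 3)) * X ^ 2, C (-21 * (2 * a - 3)) * X ^ 2, C (-6 * (a - 3)) * X,
           C (-6 * (2 * a + 1)) * X, 0, C b]) :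
    Mmat α (-1 - α) * Mmat (-1 - α) α = (2 : Matrix (Fin 6) (Fin 6) (Polynomial K)) := by
  have hC : (C α : Polynomial K) ^ 2 = -(C α) - 2 := by
    have := congrArg (C : K →+* Polynomial K) hα
    simp only [map_add, map_pow, map_ofNat, map_zero] at this
    linear_combination this
  have h2 : (2 : Matrix (Fin 6) (Fin 6) (Polynomial K)) =
      Matrix.diagonal (fun _ => (2 : Polynomial K)) := rfl
  rw [hMmat, hMmat, h2]
  refine Matrix.ext fun i j => ?_
  fin_cases i <;> fin_cases j <;>
    simp [Matrix.mul_apply, Fin.sum_univ_six, Matrix.diagonal_apply, Matrix.of_apply,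
      Matrix.cons_val', Matrix.cons_val_zero, Matrix.cons_val_one, Matrix.head_cons,
      Matrix.head_fin_const, Matrix.empty_val', Matrix.cons_val_fin_one,
      v5', v4', v3', v2', w4', w3', w2', t3', t2', s2',
      map_mul, map_add, map_neg, map_sub, map_ofNat, map_one,
      Fin.mk.injEq, Nat.reduceEqDiff, reduceIte, ite_true, ite_false, Fin.isValue] <;>
  · try ring_nf
    try simp only [hC]
    try ring
end
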